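/- Fix finite sets S, A, a horizon H, feature maps φ(s'|s,a) ∈ ℝ^d, a positive definite matrix Σ ∈ ℝ^{d×d}, a vector θ̂ ∈ ℝ^d, and β > 0. Let C = {θ ∈ ℝ^d : ‖Σ^{1/2}(θ − θ̂)‖₂ ≤ β}. Define D as the set of z = {z_h : S × A × S → ℝ_{≥0}}_{h=1}^H satisfying: the linear flow constraints Σ_{a,s'} z_h(s,a,s') = Σ_{a,s'} z_{h−1}(s',a,s) for h ∈ {2,…,H}; the initial constraints Σ_{a,s'} z_1(s,a,s') = 𝟙{s = s₁}; and, for every (s,a,h) with Σ_y z_h(s,a,y) > 0, there exists θ̄ ∈ C such that z_h(s,a,s')/Σ_y z_h(s,a,y) = ⟨θ̄, φ(s'|s,a)⟩ for all s'. Then D is a convex set. -/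

import Mathlib

open Finset
open scoped Matrix MatrixOrder

lemma sqrt_dot_eq_norm {d : ℕ} (v : Fin d → ℝ) :
    Real.sqrt (v ⬝ᵥ v) = ‖(EuclideanSpace.equiv (Fin d) ℝ).symm v‖ := by
  rw [EuclideanSpace.norm_eq]
  congr 1
  simp [dotProduct, sq]

lemma sqrt_dot_convex {d : ℕ} (M : Matrix (Fin d) (Fin d) ℝ) (θ1 θ2 θhat : Fin d → ℝ)
    (a b : ℝ) (ha : 0 ≤ a) (hb : 0 ≤ b) (hab : a + b = 1) :
    Real.sqrt ((M.mulVec (a • θ1 + b • θ2 - θhat)) ⬝ᵥ (M.mulVec (a • θ1 + b • θ2 - θhat)))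
      ≤ a * Real.sqrt ((M.mulVec (θ1 - θhat)) ⬝ᵥ (M.mulVec (θ1 - θhat)))
        + b * Real.sqrt ((M.mulVec (θ2 - θhat)) ⬝ᵥ (M.mulVec (θ2 - θhat))) := by
  have hcomb : a • θ1 + b • θ2 - θhat = a • (θ1 - θhat) + b • (θ2 - θhat) := by
    funext i
    simp only [Pi.add_apply, Pi.sub_apply, Pi.smul_apply, smul_eq_mul]
    linear_combination θhat i * hab
  rw [hcomb, Matrix.mulVec_add, Matrix.mulVec_smul, Matrix.mulVec_smul]
  rw [sqrt_dot_eq_norm, sqrt_dot_eq_norm, sqrt_dot_eq_norm]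
  set e := (EuclideanSpace.equiv (Fin d) ℝ).symm
  have he : ∀ (u v : Fin d → ℝ), e (u + v) = e u + e v := fun _ _ => rfl
  have hes : ∀ (c : ℝ) (v : Fin d → ℝ), e (c • v) = c • e v := fun _ _ => rfl
  rw [he, hes, hes]
  calc ‖a • e (M.mulVec (θ1 - θhat)) + b • e (M.mulVec (θ2 - θhat))‖
      ≤ ‖a • e (M.mulVec (θ1 - θhat))‖ + ‖b • e (M.mulVec (θ2 - θhat))‖ := norm_add_le _ _
    _ = a * ‖e (M.mulVec (θ1 - θhat))‖ + b * ‖e (M.mulVec (θ2 - θhat))‖ := by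
        rw [norm_smul, norm_smul, Real.norm_of_nonneg ha, Real.norm_of_nonneg hb]

/-- Convexity of the feasible occupancy-measure set `D_k` (Lemma 2 in the paper).
The confidence set `C` is the ellipsoid `{θ : ‖Σ^{1/2}(θ − θ̂)‖₂ ≤ β}`. -/
theorem stmt_6 {S A : Type*} [Fintype S] [Fintype A] [DecidableEq S]
    (H d : ℕ) (φ : S → S → A → (Fin d → ℝ))
    (Sig : Matrix (Fin d) (Fin d) ℝ) (hSig : Sig.PosDef)
    (θhat : Fin d → ℝ) (β : ℝ) (hβ : 0 < β) (s₁ : S) :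
    Convex ℝ {zf : ℕ → S → A → S → ℝ |
      (∀ h s a s', zf h s a s' ≥ 0) ∧
      (∀ h, 2 ≤ h → h ≤ H → ∀ s : S,
        ∑ a, ∑ s', zf h s a s' = ∑ a, ∑ s', zf (h - 1) s' a s) ∧
      (∀ s : S, ∑ a, ∑ s', zf 1 s a s' = if s = s₁ then 1 else 0) ∧
      (∀ (s : S) (a : A) (h : ℕ), 1 ≤ h → h ≤ H → 0 < ∑ y, zf h s a y →
        ∃ θbar : Fin d → ℝ,
          Real.sqrt (((CFC.sqrt Sig).mulVec (θbar - θhat)) ⬝ᵥ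
              ((CFC.sqrt Sig).mulVec (θbar - θhat))) ≤ β ∧
          ∀ s' : S, zf h s a s' / ∑ y, zf h s a y = θbar ⬝ᵥ φ s' s a)} := by
  intro z hz w hw a b ha hb hab
  obtain ⟨hz0, hzflow, hzinit, hzwit⟩ := hz
  obtain ⟨hw0, hwflow, hwinit, hwwit⟩ := hw
  have hval : ∀ h s aa s', (a • z + b • w) h s aa s' = a * z h s aa s' + b * w h s aa s' := by
    intro h s aa s'; rfl
  refine ⟨?_, ?_, ?_, ?_⟩
  · intro h s aa s'
    rw [hval]
    exact add_nonneg (mul_nonneg ha (hz0 h s aa s')) (mul_nonneg hb (hw0 h s aa s'))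
  · intro h h2 hH s
    simp only [hval, Finset.sum_add_distrib, ← Finset.mul_sum]
    rw [hzflow h h2 hH s, hwflow h h2 hH s]
  · intro s
    simp only [hval, Finset.sum_add_distrib, ← Finset.mul_sum]
    rw [hzinit s, hwinit s, ← add_mul, hab, one_mul]
  · intro s aa h h1 hH hpos
    simp only [hval] at hpos ⊢
    rw [Finset.sum_add_distrib, ← Finset.mul_sum, ← Finset.mul_sum] at hpos ⊢
    set Z := ∑ y, z h s aa y with hZdef
    set W := ∑ y, w h s aa y with hWdef
    have hZ0 : 0 ≤ Z := Finset.sum_nonneg fun y _ => hz0 h s aa y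
    have hW0 : 0 ≤ W := Finset.sum_nonneg fun y _ => hw0 h s aa y
    rcases eq_or_lt_of_le hZ0 with hZ | hZ
    · -- Z = 0, so each z h s aa y = 0
      have hzz : ∀ y, z h s aa y = 0 := by
        intro y
        have := (Finset.sum_eq_zero_iff_of_nonneg (fun y _ => hz0 h s aa y)).mp hZ.symm
        exact this y (Finset.mem_univ y)
      have hZ' : Z = 0 := hZ.symm
      have hWpos : 0 < W := by
        by_contra hc
        push_neg at hc
        have : W = 0 := le_antisymm hc hW0
        rw [hZ', this] at hpos; simp at hpos
      obtain ⟨θw, hθwC, hθwr⟩ := hwwit s aa h h1 hH hWpos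
      refine ⟨θw, hθwC, fun s' => ?_⟩
      have hb' : 0 < b := by
        by_contra hc
        push_neg at hc
        have hb0 : b = 0 := le_antisymm hc hb
        rw [hZ', hb0] at hpos; simp at hpos
      rw [hzz s', hZ', ← hθwr s']
      field_simp
      rw [← hWdef, mul_zero, zero_add, eq_div_iff hWpos.ne']
      ring
    · rcases eq_or_lt_of_le hW0 with hW | hW
      · -- W = 0
        have hww : ∀ y, w h s aa y = 0 := by
          intro y
          have := (Finset.sum_eq_zero_iff_of_nonneg (fun y _ => hw0 h s aa y)).mp hW.symm
          exact this y (Finset.mem_univ y)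
        have hW' : W = 0 := hW.symm
        obtain ⟨θz, hθzC, hθzr⟩ := hzwit s aa h h1 hH hZ
        refine ⟨θz, hθzC, fun s' => ?_⟩
        have ha' : 0 < a := by
          by_contra hc
          push_neg at hc
          have ha0 : a = 0 := le_antisymm hc ha
          rw [hW', ha0] at hpos; simp at hpos
        rw [hww s', hW', ← hθzr s']
        field_simp
        rw [← hZdef, mul_zero, add_zero, eq_div_iff hZ.ne']
        ring
      · -- both positive
        obtain ⟨θz, hθzC, hθzr⟩ := hzwit s aa h h1 hH hZ
        obtain ⟨θw, hθwC, hθwr⟩ := hwwit s aa h h1 hH hW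
        set T := a * Z + b * W with hTdef
        have hTpos : 0 < T := hpos
        set α : ℝ := a * Z / T with hαdef
        have hα0 : 0 ≤ α := div_nonneg (mul_nonneg ha hZ0) hTpos.le
        have hα1 : α + b * W / T = 1 := by
          rw [hαdef, ← add_div, ← hTdef]
          exact div_self hTpos.ne'
        have hα1' : (0:ℝ) ≤ b * W / T := div_nonneg (mul_nonneg hb hW0) hTpos.le
        refine ⟨α • θz + (b * W / T) • θw, ?_, ?_⟩
        · calc Real.sqrt _ ≤ α * Real.sqrt (((CFC.sqrt Sig).mulVec (θz - θhat)) ⬝ᵥ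
                  ((CFC.sqrt Sig).mulVec (θz - θhat)))
                + (b * W / T) * Real.sqrt (((CFC.sqrt Sig).mulVec (θw - θhat)) ⬝ᵥ
                  ((CFC.sqrt Sig).mulVec (θw - θhat))) :=
              sqrt_dot_convex _ θz θw θhat α (b * W / T) hα0 hα1' hα1
            _ ≤ α * β + (b * W / T) * β := by
                gcongr
            _ = β := by rw [← add_mul, hα1, one_mul]
        · intro s'
          have h1' : z h s aa s' / Z = θz ⬝ᵥ φ s' s aa := hθzr s'
          have h2' : w h s aa s' / W = θw ⬝ᵥ φ s' s aa := hθwr s'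
          have hdot : (α • θz + (b * W / T) • θw) ⬝ᵥ φ s' s aa
              = α * (θz ⬝ᵥ φ s' s aa) + (b * W / T) * (θw ⬝ᵥ φ s' s aa) := by
            simp [add_dotProduct, smul_dotProduct, smul_eq_mul]
          rw [hdot, ← h1', ← h2', hαdef]
          field_simp
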